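/- Let H = H₀ + V on a finite-dimensional Hilbert space, where H₀ and V are Hermitian. Suppose there are orthogonal projections Π_↑, Π_↓ with Π_↑ + Π_↓ = I, both commuting with H₀, such that Π_↑H₀Π_↑ ≥ a·Π_↑ (on the range of Π_↑), Π_↓H₀Π_↓ ≤ b·Π_↓ with a > b, and V = Π_↑VΠ_↓ + Π_↓VΠ_↑ is purely off-diagonal with ‖Π_↑VΠ_↓‖ ≤ V_max. If ψ is a normalized eigenvector of H with c_↑² = ⟨ψ|Π_↑|ψ⟩, then c_↑⁴ − c_↑² + V_max²/(a−b)² ≥ 0; consequently, if 2V_max < a − b, then either c_↑² ≥ ξ₁ or c_↑² ≤ ξ₂, where ξ_{1,2} = 1/2 ± (1/2)√(1 − 4V_max²/(a−b)²). -/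

import Mathlib

open scoped InnerProductSpace

lemma eigsplit_real (a b Vmax Ek t u w : ℝ) (hab : b < a)
    (hu : 0 ≤ u) (hw : 0 ≤ w) (huw : u ^ 2 + w ^ 2 = 1)
    (h1 : a * u ^ 2 + t ≤ Ek * u ^ 2)
    (h2 : Ek * w ^ 2 ≤ b * w ^ 2 + t)
    (h3 : |t| ≤ Vmax * u * w) :
    u ^ 2 * w ^ 2 * (a - b) ^ 2 ≤ Vmax ^ 2 := by
  have h1' : (a - Ek) * u ^ 2 ≤ -t := by nlinarith
  have h2' : (Ek - b) * w ^ 2 ≤ t := by nlinarith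
  have hm1 := mul_le_mul_of_nonneg_right h1' (sq_nonneg w)
  have hm2 := mul_le_mul_of_nonneg_right h2' (sq_nonneg u)
  have h4 : t * (u ^ 2 - w ^ 2) ≤ |t| := by
    have h5 : |u ^ 2 - w ^ 2| ≤ 1 := by
      rw [abs_le]; constructor <;> nlinarith [sq_nonneg u, sq_nonneg w]
    calc t * (u ^ 2 - w ^ 2) ≤ |t * (u ^ 2 - w ^ 2)| := le_abs_self _
      _ = |t| * |u ^ 2 - w ^ 2| := abs_mul _ _
      _ ≤ |t| * 1 := mul_le_mul_of_nonneg_left h5 (abs_nonneg t)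
      _ = |t| := mul_one _
  have key : (a - b) * (u * w) * (u * w) ≤ Vmax * (u * w) := by nlinarith
  rcases eq_or_lt_of_le (mul_nonneg hu hw) with h0 | h0
  · have he : u ^ 2 * w ^ 2 = (u * w) ^ 2 := by ring
    rw [he, ← h0]
    simpa using sq_nonneg Vmax
  · have hle : (a - b) * (u * w) ≤ Vmax := le_of_mul_le_mul_right key h0
    nlinarith [mul_self_le_mul_self (mul_nonneg (by linarith : (0:ℝ) ≤ a - b) h0.le) hle]


set_option maxHeartbeats 1000000 in
/-- eigenstate splitting.  `H = H₀ + V` with `H₀` block-bounded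
(`≥ a` on ran Π_↑, `≤ b` on ran Π_↓, `a > b`), `V` purely off-diagonal with
block norm `≤ V_max`.  For a normalized eigenvector `ψ` of `H`, the weight
`c↑² = ⟨ψ|Π_↑|ψ⟩` satisfies `c↑⁴ − c↑² + V_max²/(a−b)² ≥ 0`; consequently, if
`2V_max < a − b`, then `c↑² ≥ ξ₁` or `c↑² ≤ ξ₂`. -/
theorem eigenstate_splitting
    {E : Type*} [NormedAddCommGroup E] [InnerProductSpace ℂ E]
    [FiniteDimensional ℂ E]
    (H0 V P : E →ₗ[ℂ] E)
    (hH0 : LinearMap.IsSymmetric H0) (hV : LinearMap.IsSymmetric V)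
    (hP : LinearMap.IsSymmetric P) (hPproj : P ∘ₗ P = P)
    (hPH0 : P ∘ₗ H0 = H0 ∘ₗ P)
    (a b Vmax : ℝ) (hab : b < a) (hVmax : 0 ≤ Vmax)
    (ha : ∀ v, P v = v → a * ‖v‖ ^ 2 ≤ (⟪v, H0 v⟫_ℂ).re)
    (hb : ∀ v, ((LinearMap.id : E →ₗ[ℂ] E) - P) v = v →
      (⟪v, H0 v⟫_ℂ).re ≤ b * ‖v‖ ^ 2)
    (hoff1 : P ∘ₗ V ∘ₗ P = 0)
    (hoff2 : ((LinearMap.id : E →ₗ[ℂ] E) - P) ∘ₗ V ∘ₗ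
        ((LinearMap.id : E →ₗ[ℂ] E) - P) = 0)
    (hVbound : ∀ v w, ‖⟪v, V w⟫_ℂ‖ ≤ Vmax * ‖v‖ * ‖w‖)
    (ψ : E) (hψ : ‖ψ‖ = 1) (Ek : ℝ) (heig : (H0 + V) ψ = (Ek : ℂ) • ψ)
    (c2 : ℝ) (hc2 : c2 = (⟪ψ, P ψ⟫_ℂ).re) :
    c2 ^ 2 - c2 + Vmax ^ 2 / (a - b) ^ 2 ≥ 0 ∧
      (2 * Vmax < a - b →
        c2 ≥ 1 / 2 + Real.sqrt (1 - 4 * Vmax ^ 2 / (a - b) ^ 2) / 2 ∨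
        c2 ≤ 1 / 2 - Real.sqrt (1 - 4 * Vmax ^ 2 / (a - b) ^ 2) / 2) := by
  have hQsym : LinearMap.IsSymmetric ((LinearMap.id : E →ₗ[ℂ] E) - P) := by
    intro x y
    simp [inner_sub_left, inner_sub_right, hP x y]
  set φ : E := P ψ with hφdef
  set χ : E := ψ - P ψ with hχdef
  have hPφ : P φ = φ := by
    have h := LinearMap.ext_iff.mp hPproj ψ
    simpa [LinearMap.comp_apply] using h
  have hPχ : P χ = 0 := by
    rw [hχdef, map_sub]
    rw [hφdef] at hPφ
    rw [hPφ]; abel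
  have hsum : φ + χ = ψ := by rw [hφdef, hχdef]; abel
  clear_value φ χ
  clear hφdef hχdef
  have hQχ : ((LinearMap.id : E →ₗ[ℂ] E) - P) χ = χ := by
    simp [LinearMap.sub_apply, hPχ]
  -- orthogonality facts
  have horth : ⟪φ, χ⟫_ℂ = 0 := by
    rw [← hPφ, hP φ χ, hPχ, inner_zero_right]
  have horth' : ⟪χ, φ⟫_ℂ = 0 := by
    rw [← inner_conj_symm, horth, map_zero]
  -- Pythagoras
  have hpyth : ‖φ‖ ^ 2 + ‖χ‖ ^ 2 = 1 := by
    have h := norm_add_sq (𝕜 := ℂ) φ χ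
    rw [hsum, hψ, horth] at h
    simp only [map_zero, mul_zero, add_zero, one_pow, RCLike.zero_re, zero_add] at h
    linarith
  -- c2 = ‖φ‖²
  have hc2' : c2 = ‖φ‖ ^ 2 := by
    have h : ⟪ψ, φ⟫_ℂ = (‖φ‖ : ℂ) ^ 2 := by
      rw [← hsum, inner_add_left, horth', add_zero, inner_self_eq_norm_sq_to_K]
      rfl
    rw [hc2, h]
    norm_cast
  have hinnφψ : ⟪φ, ψ⟫_ℂ = (‖φ‖ : ℂ) ^ 2 := by
    rw [← hsum, inner_add_right, horth, add_zero, inner_self_eq_norm_sq_to_K]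
    rfl
  have hinnχψ : ⟪χ, ψ⟫_ℂ = (‖χ‖ : ℂ) ^ 2 := by
    rw [← hsum, inner_add_right, horth', zero_add, inner_self_eq_norm_sq_to_K]
    rfl
  -- commuting of P and H0 pointwise
  have hcomm : ∀ v, P (H0 v) = H0 (P v) := by
    intro v
    have h := LinearMap.ext_iff.mp hPH0 v
    simpa [LinearMap.comp_apply] using h
  -- block equations
  have heφ : ⟪φ, H0 φ⟫_ℂ + ⟪φ, V χ⟫_ℂ = (Ek : ℂ) * (‖φ‖ : ℂ) ^ 2 := by
    have h := congrArg (fun x => ⟪φ, x⟫_ℂ) heig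
    simp only [LinearMap.add_apply, inner_add_right, inner_smul_right] at h
    rw [hinnφψ] at h
    have hH0part : ⟪φ, H0 ψ⟫_ℂ = ⟪φ, H0 φ⟫_ℂ := by
      have hz : ⟪φ, H0 χ⟫_ℂ = 0 := by
        rw [← hPφ, hP φ (H0 χ), hcomm, hPχ, map_zero, inner_zero_right]
      rw [← hsum, map_add, inner_add_right, hz, add_zero]
    have hVpart : ⟪φ, V ψ⟫_ℂ = ⟪φ, V χ⟫_ℂ := by
      have hVφφ : ⟪φ, V φ⟫_ℂ = 0 := by
        have h0 := LinearMap.ext_iff.mp hoff1 φ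
        simp only [LinearMap.comp_apply, LinearMap.zero_apply, hPφ] at h0
        calc ⟪φ, V φ⟫_ℂ = ⟪P φ, V φ⟫_ℂ := by rw [hPφ]
          _ = ⟪φ, P (V φ)⟫_ℂ := hP φ (V φ)
          _ = 0 := by rw [h0, inner_zero_right]
      rw [← hsum, map_add, inner_add_right, hVφφ, zero_add]
    rw [hH0part, hVpart] at h
    exact h
  have heχ : ⟪χ, H0 χ⟫_ℂ + ⟪χ, V φ⟫_ℂ = (Ek : ℂ) * (‖χ‖ : ℂ) ^ 2 := by
    have h := congrArg (fun x => ⟪χ, x⟫_ℂ) heig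
    simp only [LinearMap.add_apply, inner_add_right, inner_smul_right] at h
    rw [hinnχψ] at h
    have hH0part : ⟪χ, H0 ψ⟫_ℂ = ⟪χ, H0 χ⟫_ℂ := by
      have hz : ⟪χ, H0 φ⟫_ℂ = 0 := by
        have hPH0φ : H0 φ = P (H0 φ) := by rw [hcomm, hPφ]
        rw [hPH0φ, ← hP χ (H0 φ), hPχ, inner_zero_left]
      rw [← hsum, map_add, inner_add_right, hz, zero_add]
    have hVpart : ⟪χ, V ψ⟫_ℂ = ⟪χ, V φ⟫_ℂ := by
      have hVχχ : ⟪χ, V χ⟫_ℂ = 0 := by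
        have h0 := LinearMap.ext_iff.mp hoff2 χ
        simp only [LinearMap.comp_apply, LinearMap.zero_apply, hQχ] at h0
        calc ⟪χ, V χ⟫_ℂ = ⟪((LinearMap.id : E →ₗ[ℂ] E) - P) χ, V χ⟫_ℂ := by rw [hQχ]
          _ = ⟪χ, ((LinearMap.id : E →ₗ[ℂ] E) - P) (V χ)⟫_ℂ := hQsym χ (V χ)
          _ = 0 := by rw [h0, inner_zero_right]
      rw [← hsum, map_add, inner_add_right, hVχχ, add_zero]
    rw [hH0part, hVpart] at h
    exact h
  -- t symmetry
  set t : ℝ := (⟪φ, V χ⟫_ℂ).re with htdef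
  have ht' : (⟪χ, V φ⟫_ℂ).re = t := by
    have h1 : ⟪χ, V φ⟫_ℂ = (starRingEnd ℂ) ⟪φ, V χ⟫_ℂ := by
      rw [← hV χ φ, ← inner_conj_symm]
    rw [h1, htdef, Complex.conj_re]
  -- real parts
  have e1 : (⟪φ, H0 φ⟫_ℂ).re + t = Ek * ‖φ‖ ^ 2 := by
    have h := congrArg Complex.re heφ
    simpa [← Complex.ofReal_pow, ← Complex.ofReal_mul] using h
  have e2 : (⟪χ, H0 χ⟫_ℂ).re + t = Ek * ‖χ‖ ^ 2 := by
    have h := congrArg Complex.re heχ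
    rw [Complex.add_re, ht'] at h
    simpa [← Complex.ofReal_pow, ← Complex.ofReal_mul] using h
  -- bounds
  have ha1 : a * ‖φ‖ ^ 2 ≤ (⟪φ, H0 φ⟫_ℂ).re := ha φ hPφ
  have hb1 : (⟪χ, H0 χ⟫_ℂ).re ≤ b * ‖χ‖ ^ 2 := hb χ hQχ
  have hts : |t| ≤ Vmax * ‖φ‖ * ‖χ‖ := by
    refine le_trans ?_ (hVbound φ χ)
    rw [htdef]
    exact Complex.abs_re_le_norm _
  -- main quadratic bound
  have main : ‖φ‖ ^ 2 * ‖χ‖ ^ 2 * (a - b) ^ 2 ≤ Vmax ^ 2 :=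
    eigsplit_real a b Vmax Ek t ‖φ‖ ‖χ‖ hab (norm_nonneg _) (norm_nonneg _)
      hpyth (by linarith) (by linarith) hts
  have habsq : (0 : ℝ) < (a - b) ^ 2 := pow_pos (by linarith) 2
  have hdiv : ‖φ‖ ^ 2 * ‖χ‖ ^ 2 ≤ Vmax ^ 2 / (a - b) ^ 2 := by
    rw [le_div_iff₀ habsq]; exact main
  have part1 : c2 ^ 2 - c2 + Vmax ^ 2 / (a - b) ^ 2 ≥ 0 := by
    nlinarith [hdiv, hpyth, hc2']
  refine ⟨part1, fun hgap => ?_⟩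
  set q : ℝ := Vmax ^ 2 / (a - b) ^ 2 with hq
  have hq4 : 4 * Vmax ^ 2 / (a - b) ^ 2 = 4 * q := by rw [hq]; ring
  rw [hq4]
  set D : ℝ := 1 - 4 * q with hD
  have hDpos : 0 ≤ D := by
    rw [hD, hq, sub_nonneg, ← mul_div_assoc, div_le_one habsq]
    nlinarith
  have hs2 : Real.sqrt D ^ 2 = D := Real.sq_sqrt hDpos
  by_contra hcon
  push_neg at hcon
  obtain ⟨hc1, hcc⟩ := hcon
  have hprod : 0 < (1 / 2 + Real.sqrt D / 2 - c2) * (c2 - (1 / 2 - Real.sqrt D / 2)) :=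
    mul_pos (by linarith) (by linarith)
  nlinarith [hprod, hs2, part1]
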